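/- Let G = (V,E) be a graph with arboricity at most α in which each edge e has a positive weight w(e). Suppose each vertex u picks an incident edge of maximum weight among its incident edges. Then the total weight of the set of picked edges is at least w(E)/(2α). -/

import Mathlib

open Finset SimpleGraph


lemma my_acyclic_mono {V : Type*} {G H : SimpleGraph V} (h : H ≤ G) (hG : G.IsAcyclic) :
    H.IsAcyclic := fun _ c hc => hG (c.mapLe h) (hc.mapLe h)

lemma my_exists_leaf {V : Type*} [Fintype V] [DecidableEq V] (G : SimpleGraph V)
    [DecidableRel G.Adj] (hac : G.IsAcyclic) (hne : G.edgeFinset.Nonempty) :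
    ∃ v, G.degree v = 1 := by
  classical
  obtain ⟨e, he⟩ := hne
  rw [mem_edgeFinset] at he
  induction e with
  | h a b =>
  have hab : G.Adj a b := he
  set P : ℕ → Prop := fun n => ∃ (u v : V) (p : G.Walk u v), p.IsPath ∧ p.length = n with hP
  have h1 : P 1 := ⟨a, b, Walk.cons hab Walk.nil, by simp [hab.ne], by simp⟩
  set N := Nat.findGreatest P (Fintype.card V) with hN
  have hcard : 1 ≤ Fintype.card V := Fintype.card_pos_iff.mpr ⟨a⟩
  have hNP : P N := Nat.findGreatest_spec hcard h1
  have hN1 : 1 ≤ N := Nat.le_findGreatest hcard h1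
  obtain ⟨u, v, p, hp, hlen⟩ := hNP
  cases p with
  | nil => simp at hlen; omega
  | cons hux q =>
    rename_i x
    rw [Walk.cons_isPath_iff] at hp
    refine ⟨u, ?_⟩
    have hnb : G.neighborFinset u = {x} := by
      ext y
      simp only [mem_neighborFinset, Finset.mem_singleton]
      constructor
      · intro hy
        by_contra hyx
        by_cases hmem : y ∈ (Walk.cons hux q).support
        · -- build a cycle
          simp only [Walk.support_cons, List.mem_cons] at hmem
          rcases hmem with rfl | hmem
          · exact G.irrefl hy
          · have hq' : (q.takeUntil y hmem).IsPath := hp.1.takeUntil hmem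
            have hr : (Walk.cons hux (q.takeUntil y hmem)).IsPath := by
              rw [Walk.cons_isPath_iff]
              exact ⟨hq', fun h => hp.2 (q.support_takeUntil_subset hmem h)⟩
            have hcyc : (Walk.cons hy (Walk.cons hux (q.takeUntil y hmem)).reverse).IsCycle := by
              rw [Walk.cons_isCycle_iff]
              refine ⟨hr.reverse, ?_⟩
              rw [Walk.edges_reverse, List.mem_reverse]
              simp only [Walk.edges_cons, List.mem_cons]
              rintro (h | h)
              · rw [Sym2.eq_iff] at h
                rcases h with ⟨-, rfl⟩ | ⟨rfl, rfl⟩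
                · exact hyx rfl
                · exact G.irrefl hy
              · exact hp.2 (q.support_takeUntil_subset hmem
                  (Walk.fst_mem_support_of_mem_edges _ h))
            exact hac _ hcyc
        · -- extend the path
          have hext : (Walk.cons (hy.symm) (Walk.cons hux q)).IsPath := by
            rw [Walk.cons_isPath_iff]
            exact ⟨by rw [Walk.cons_isPath_iff]; exact hp, hmem⟩
          have hlt : (Walk.cons (hy.symm) (Walk.cons hux q)).length ≤ Fintype.card V := by
            have := hext.length_lt
            omega
          have := Nat.findGreatest_is_greatest (P := P)
            (k := (Walk.cons (hy.symm) (Walk.cons hux q)).length)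
            (by simp [← hN, Walk.length_cons] at hlen ⊢; omega) hlt
          exact this ⟨_, _, _, hext, rfl⟩
      · rintro rfl; exact hux
    rw [← card_neighborFinset_eq_degree, hnb, Finset.card_singleton]

lemma my_forest_inj {V : Type*} [Fintype V] [DecidableEq V] :
    ∀ (n : ℕ) (G : SimpleGraph V) [DecidableRel G.Adj], G.IsAcyclic →
      G.edgeFinset.card = n →
      ∃ f : Sym2 V → V, (∀ e ∈ G.edgeFinset, f e ∈ e) ∧ Set.InjOn f ↑G.edgeFinset := by
  intro n
  induction n with
  | zero =>
    intro G _ _ hcard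
    rw [Finset.card_eq_zero] at hcard
    exact ⟨fun e => e.out.1, fun e he => by simp [hcard] at he,
      fun e he => by simp [hcard] at he⟩
  | succ n ih =>
    intro G _ hac hcard
    classical
    have hne : G.edgeFinset.Nonempty := Finset.card_pos.mp (by omega)
    obtain ⟨v, hv⟩ := my_exists_leaf G hac hne
    have hinc : (G.incidenceFinset v).card = 1 := by
      rw [card_incidenceFinset_eq_degree, hv]
    obtain ⟨e₀, he₀⟩ := Finset.card_eq_one.mp hinc
    have he₀i : e₀ ∈ G.incidenceFinset v := by rw [he₀]; exact Finset.mem_singleton_self _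
    rw [mem_incidenceFinset] at he₀i
    have he₀e : e₀ ∈ G.edgeFinset := by rw [mem_edgeFinset]; exact he₀i.1
    have hve₀ : v ∈ e₀ := he₀i.2
    have hnot : ∀ e ∈ G.edgeFinset, e ≠ e₀ → v ∉ e := by
      intro e he hne' hvmem
      have : e ∈ G.incidenceFinset v := by
        rw [mem_incidenceFinset]; exact ⟨(mem_edgeFinset).mp he, hvmem⟩
      rw [he₀] at this
      exact hne' (Finset.mem_singleton.mp this)
    set G' := G.deleteEdges {e₀} with hG'
    have hG'edge : G'.edgeFinset = G.edgeFinset.erase e₀ := by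
      ext e
      simp [hG', edgeSet_deleteEdges, and_comm]
    have hG'card : G'.edgeFinset.card = n := by
      rw [hG'edge, Finset.card_erase_of_mem he₀e, hcard]; omega
    obtain ⟨f, hf1, hf2⟩ := ih G' (my_acyclic_mono (deleteEdges_le _) hac) hG'card
    refine ⟨Function.update f e₀ v, ?_, ?_⟩
    · intro e he
      by_cases h : e = e₀
      · subst h; rw [Function.update_self]; exact hve₀
      · rw [Function.update_of_ne h]
        exact hf1 e (by rw [hG'edge]; exact Finset.mem_erase.mpr ⟨h, he⟩)
    · intro e₁ h₁ e₂ h₂ heq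
      simp only [Finset.coe_sort_coe, Finset.mem_coe] at h₁ h₂
      by_cases k₁ : e₁ = e₀ <;> by_cases k₂ : e₂ = e₀
      · rw [k₁, k₂]
      · subst k₁
        rw [Function.update_self, Function.update_of_ne k₂] at heq
        exact absurd (heq ▸ hf1 e₂ (by rw [hG'edge]; exact Finset.mem_erase.mpr ⟨k₂, h₂⟩))
          (hnot e₂ h₂ k₂)
      · subst k₂
        rw [Function.update_self, Function.update_of_ne k₁] at heq
        exact absurd (heq ▸ hf1 e₁ (by rw [hG'edge]; exact Finset.mem_erase.mpr ⟨k₁, h₁⟩))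
          (hnot e₁ h₁ k₁)
      · rw [Function.update_of_ne k₁, Function.update_of_ne k₂] at heq
        exact hf2 (by rw [hG'edge]; exact Finset.mem_coe.mpr (Finset.mem_erase.mpr ⟨k₁, h₁⟩))
          (by rw [hG'edge]; exact Finset.mem_coe.mpr (Finset.mem_erase.mpr ⟨k₂, h₂⟩)) heq

lemma my_forest_inj' {V : Type*} [Fintype V] [DecidableEq V] (G : SimpleGraph V)
    [DecidableRel G.Adj] (hac : G.IsAcyclic) :
    ∃ f : Sym2 V → V, (∀ e ∈ G.edgeSet, f e ∈ e) ∧ Set.InjOn f G.edgeSet := by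
  obtain ⟨f, h1, h2⟩ := my_forest_inj G.edgeFinset.card G hac rfl
  refine ⟨f, fun e he => h1 e (mem_edgeFinset.mpr he), ?_⟩
  rwa [coe_edgeFinset] at h2

lemma my_card_le_two {V : Type*} [DecidableEq V] (e : Sym2 V) (s : Finset V)
    (h : ∀ v ∈ s, v ∈ e) : s.card ≤ 2 := by
  induction e with
  | h a b =>
    have : s ⊆ {a, b} := by
      intro v hv
      have := h v hv
      rw [Sym2.mem_iff] at this
      simp [this]
    calc s.card ≤ ({a, b} : Finset V).card := Finset.card_le_card this
      _ ≤ 2 := Finset.card_insert_le _ _ |>.trans (by simp)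

/-- Let `G = (V,E)` be a graph whose edge set is partitioned into `α`
edge-disjoint forests (arboricity at most `α`), with a positive weight `w(e)` on
each edge.  Suppose each vertex `u` (with at least one incident edge) picks an
incident edge of maximum weight among its incident edges.  Then the total weight
of the set of picked edges is at least `w(E)/(2α)`. -/
theorem stmt5 {V : Type*} [Fintype V] [DecidableEq V]
    (G : SimpleGraph V) [DecidableRel G.Adj]
    (α : ℕ) (hα : 1 ≤ α)
    (F : Fin α → SimpleGraph V)
    (hforest : ∀ i, (F i).IsAcyclic)
    (hsub : ∀ i, F i ≤ G)
    (hpart : ∀ e ∈ G.edgeSet, ∃! i, e ∈ (F i).edgeSet)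
    (w : Sym2 V → ℝ)
    (hw : ∀ e ∈ G.edgeFinset, 0 < w e)
    (pick : V → Sym2 V)
    (hpick : ∀ v, 0 < G.degree v →
      pick v ∈ G.incidenceFinset v ∧ ∀ e ∈ G.incidenceFinset v, w e ≤ w (pick v)) :
    (∑ e ∈ G.edgeFinset, w e) / (2 * α) ≤
      ∑ e ∈ (Finset.univ.filter fun v => 0 < G.degree v).image pick, w e := by
  classical
  set A := Finset.univ.filter fun v => 0 < G.degree v with hA
  set S := A.image pick with hS
  set T := ∑ v ∈ A, w (pick v) with hT
  -- basic facts about picks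
  have hpickA : ∀ v ∈ A, pick v ∈ G.edgeFinset ∧ v ∈ pick v := by
    intro v hvA
    rw [hA, Finset.mem_filter] at hvA
    have h1 := (hpick v hvA.2).1
    rw [mem_incidenceFinset] at h1
    exact ⟨(mem_edgeFinset).mpr h1.1, h1.2⟩
  -- index function
  have hidx : ∀ e ∈ G.edgeFinset, ∃ i, e ∈ (F i).edgeSet := by
    intro e he
    obtain ⟨i, hi, -⟩ := hpart e ((mem_edgeFinset).mp he)
    exact ⟨i, hi⟩
  set idx : Sym2 V → Fin α := fun e =>
    if h : e ∈ G.edgeFinset then (hidx e h).choose else ⟨0, hα⟩ with hidxdef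
  have hidxspec : ∀ e ∈ G.edgeFinset, e ∈ (F (idx e)).edgeSet := by
    intro e he
    simp only [hidxdef, dif_pos he]
    exact (hidx e he).choose_spec
  -- Step 1 : for each i, weight of fiber ≤ T
  have step1 : ∀ i : Fin α,
      ∑ e ∈ G.edgeFinset.filter (fun e => idx e = i), w e ≤ T := by
    intro i
    set s := G.edgeFinset.filter (fun e => idx e = i) with hs
    have hsub' : (s : Set (Sym2 V)) ⊆ (F i).edgeSet := by
      intro e he
      rw [Finset.mem_coe, hs, Finset.mem_filter] at he
      rw [← he.2]
      exact hidxspec e he.1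
    set H := SimpleGraph.fromEdgeSet (s : Set (Sym2 V)) with hH
    have hHle : H ≤ F i := by
      rw [hH, ← fromEdgeSet_edgeSet (F i)]
      exact fromEdgeSet_mono hsub'
    have hHac : H.IsAcyclic := fun _ c hc => (hforest i) (c.mapLe hHle) (hc.mapLe hHle)
    have hHedge : H.edgeSet = (s : Set (Sym2 V)) := by
      rw [hH, edgeSet_fromEdgeSet]
      ext e
      constructor
      · rintro ⟨h1, -⟩; exact h1
      · intro h1
        refine ⟨h1, ?_⟩
        rw [Sym2.mem_diagSet]
        have hmem := h1
        rw [Finset.mem_coe, hs, Finset.mem_filter] at hmem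
        exact SimpleGraph.not_isDiag_of_mem_edgeSet G ((mem_edgeFinset).mp hmem.1)
    obtain ⟨f, hf1, hf2⟩ := my_forest_inj' H hHac
    rw [hHedge] at hf1 hf2
    have hkey : ∀ e ∈ s, e ∈ G.incidenceFinset (f e) := by
      intro e he
      rw [mem_incidenceFinset]
      have heG : e ∈ G.edgeFinset := by
        rw [hs, Finset.mem_filter] at he; exact he.1
      exact ⟨(mem_edgeFinset).mp heG, hf1 e he⟩
    have hdeg : ∀ e ∈ s, f e ∈ A := by
      intro e he
      rw [hA, Finset.mem_filter]
      refine ⟨Finset.mem_univ _, ?_⟩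
      rw [← card_incidenceFinset_eq_degree]
      exact Finset.card_pos.mpr ⟨e, hkey e he⟩
    calc ∑ e ∈ s, w e ≤ ∑ e ∈ s, w (pick (f e)) := by
          apply Finset.sum_le_sum
          intro e he
          have hd : 0 < G.degree (f e) := by
            have := hdeg e he; rw [hA, Finset.mem_filter] at this; exact this.2
          exact (hpick (f e) hd).2 e (hkey e he)
      _ = ∑ v ∈ s.image f, w (pick v) := by
          rw [Finset.sum_image]
          intro x hx y hy hxy
          exact hf2 (Finset.mem_coe.mpr hx) (Finset.mem_coe.mpr hy) hxy
      _ ≤ T := by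
          rw [hT]
          apply Finset.sum_le_sum_of_subset_of_nonneg
          · intro v hv
            obtain ⟨e, he, rfl⟩ := Finset.mem_image.mp hv
            exact hdeg e he
          · intro v hvA _
            exact le_of_lt (hw _ (hpickA v hvA).1)
  -- Step 2 : total weight = sum over fibers ≤ α * T
  have step2 : ∑ e ∈ G.edgeFinset, w e ≤ (α : ℝ) * T := by
    have hfib : ∑ i : Fin α, ∑ e ∈ G.edgeFinset.filter (fun e => idx e = i), w e
        = ∑ e ∈ G.edgeFinset, w e :=
      Finset.sum_fiberwise_of_maps_to (fun e _ => Finset.mem_univ _) w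
    rw [← hfib]
    calc ∑ i : Fin α, ∑ e ∈ G.edgeFinset.filter (fun e => idx e = i), w e
        ≤ ∑ _i : Fin α, T := Finset.sum_le_sum (fun i _ => step1 i)
      _ = (α : ℝ) * T := by simp [mul_comm]
  -- Step 3 : T ≤ 2 * sum over S
  have step3 : T ≤ 2 * ∑ e ∈ S, w e := by
    have hfib : ∑ e ∈ S, ∑ v ∈ A.filter (fun v => pick v = e), w (pick v) = T := by
      rw [hT, hS]
      exact Finset.sum_fiberwise_of_maps_to (fun v hv => Finset.mem_image_of_mem pick hv) _
    rw [← hfib, Finset.mul_sum]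
    apply Finset.sum_le_sum
    intro e he
    obtain ⟨v₀, hv₀A, rfl⟩ := Finset.mem_image.mp he
    have hwe : 0 < w (pick v₀) := hw _ (hpickA v₀ hv₀A).1
    have hcard : (A.filter (fun v => pick v = pick v₀)).card ≤ 2 := by
      apply my_card_le_two (pick v₀)
      intro v hv
      rw [Finset.mem_filter] at hv
      have := (hpickA v hv.1).2
      rwa [hv.2] at this
    calc ∑ v ∈ A.filter (fun v => pick v = pick v₀), w (pick v)
        = ∑ _v ∈ A.filter (fun v => pick v = pick v₀), w (pick v₀) := by
          apply Finset.sum_congr rfl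
          intro v hv
          rw [(Finset.mem_filter.mp hv).2]
      _ = ((A.filter (fun v => pick v = pick v₀)).card : ℝ) * w (pick v₀) := by
          rw [Finset.sum_const, nsmul_eq_mul]
      _ ≤ 2 * w (pick v₀) := by
          apply mul_le_mul_of_nonneg_right _ (le_of_lt hwe)
          exact_mod_cast hcard
  -- combine
  have hpos : (0 : ℝ) < 2 * α := by positivity
  rw [div_le_iff₀ hpos]
  calc ∑ e ∈ G.edgeFinset, w e ≤ (α : ℝ) * T := step2
    _ ≤ (α : ℝ) * (2 * ∑ e ∈ S, w e) :=
        mul_le_mul_of_nonneg_left step3 (by positivity)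
    _ = (∑ e ∈ S, w e) * (2 * α) := by ring
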